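/- arXiv:2409.01167 — 2 statements merged into one kernel-verified Lean document; each statement's English description precedes it below -/
import Mathlib

section
/- Let H be an infinite dimensional separable complex Hilbert space and T an injective bounded linear operator on H with dense range. Set A = A_T and B = iA_{−T} on H × H. Then A² = B², the operator X := A + B is injective with dense range, and XA = BX and AX = XB. -/
/-- The operator `A_T` on the Hilbert space direct sum `H ⊕₂ H` given by
`A_T (x, y) = (y, T x)`. -/
noncomputable def AOp {H : Type*} [NormedAddCommGroup H] [InnerProductSpace ℂ H]
    (T : H →L[ℂ] H) : WithLp 2 (H × H) →L[ℂ] WithLp 2 (H × H) :=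
  ((WithLp.prodContinuousLinearEquiv 2 ℂ H H).symm : (H × H) →L[ℂ] WithLp 2 (H × H)) ∘L
    ((ContinuousLinearMap.snd ℂ H H).prod (T.comp (ContinuousLinearMap.fst ℂ H H))) ∘L
      ((WithLp.prodContinuousLinearEquiv 2 ℂ H H) : WithLp 2 (H × H) →L[ℂ] (H × H))

theorem stmt_16 {H : Type*} [NormedAddCommGroup H] [InnerProductSpace ℂ H]
    [CompleteSpace H] [TopologicalSpace.SeparableSpace H]
    (hdim : ¬ FiniteDimensional ℂ H)
    (T : H →L[ℂ] H) (hinj : Function.Injective T) (hdr : DenseRange T) :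
    (AOp T) ^ 2 = (Complex.I • AOp (-T)) ^ 2 ∧
      Function.Injective (AOp T + Complex.I • AOp (-T)) ∧
      DenseRange (AOp T + Complex.I • AOp (-T)) ∧
      (AOp T + Complex.I • AOp (-T)) * (AOp T) =
        (Complex.I • AOp (-T)) * (AOp T + Complex.I • AOp (-T)) ∧
      (AOp T) * (AOp T + Complex.I • AOp (-T)) =
        (AOp T + Complex.I • AOp (-T)) * (Complex.I • AOp (-T)) := by
  set e := WithLp.prodContinuousLinearEquiv 2 ℂ H H with he
  have hA : ∀ (S : H →L[ℂ] H) (z : WithLp 2 (H × H)),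
      e ((AOp S) z) = ((e z).2, S (e z).1) := by
    intro S z; simp [AOp, he]
  have hI1 : (1 + Complex.I) ≠ 0 := by
    intro h
    have := congrArg Complex.im h
    simp at this
  have hI2 : (1 - Complex.I) ≠ 0 := by
    intro h
    have := congrArg Complex.im h
    simp at this
  have hX : ∀ z : WithLp 2 (H × H),
      e ((AOp T + Complex.I • AOp (-T)) z) =
        ((1 + Complex.I) • (e z).2, (1 - Complex.I) • T (e z).1) := by
    intro z
    simp only [ContinuousLinearMap.add_apply, ContinuousLinearMap.smul_apply, map_add,
      map_smul, hA, ContinuousLinearMap.neg_apply, Prod.mk_add_mk, Prod.smul_mk,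
      Prod.mk.injEq]
    constructor <;> module
  refine ⟨?_, ?_, ?_, ?_, ?_⟩
  · ext z
    apply e.injective
    simp only [pow_two, ContinuousLinearMap.mul_apply, ContinuousLinearMap.smul_apply, hA,
      map_smul, Prod.smul_fst, Prod.smul_snd, ContinuousLinearMap.neg_apply, map_smul,
      Prod.smul_mk, Prod.mk.injEq, smul_smul, Complex.I_mul_I]
    constructor <;> module
  · intro a b hab
    have h := congrArg e hab
    rw [hX, hX] at h
    have h1 : (e a).2 = (e b).2 := by
      have := congrArg Prod.fst h
      exact smul_right_injective H hI1 this
    have h2 : (e a).1 = (e b).1 := by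
      have := congrArg Prod.snd h
      exact hinj (smul_right_injective H hI2 this)
    exact e.injective (Prod.ext h2 h1)
  · have hfun : ⇑(AOp T + Complex.I • AOp (-T)) =
        (⇑e.symm) ∘ ((fun p : H × H =>
          ((1 + Complex.I) • p.2, (1 - Complex.I) • T p.1))) ∘ ⇑e := by
      funext z
      simp only [Function.comp_apply]
      rw [← hX z, ContinuousLinearEquiv.symm_apply_apply]
    rw [hfun]
    have hf : Function.Surjective (fun y : H => (1 + Complex.I) • y) := by
      intro y
      exact ⟨(1 + Complex.I)⁻¹ • y, by simp [smul_smul, mul_inv_cancel₀ hI1]⟩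
    have hg : DenseRange (fun x : H => (1 - Complex.I) • T x) := by
      have hs : Function.Surjective (fun y : H => (1 - Complex.I) • y) := by
        intro y
        exact ⟨(1 - Complex.I)⁻¹ • y, by simp [smul_smul, mul_inv_cancel₀ hI2]⟩
      exact hs.denseRange.comp hdr (continuous_const_smul _)
    have hmid : DenseRange (fun p : H × H =>
        ((1 + Complex.I) • p.2, (1 - Complex.I) • T p.1)) := by
      have : (fun p : H × H => ((1 + Complex.I) • p.2, (1 - Complex.I) • T p.1)) =
          (Prod.map (fun y : H => (1 + Complex.I) • y)
            (fun x : H => (1 - Complex.I) • T x)) ∘ Prod.swap := by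
        funext p; rfl
      rw [this]
      exact (DenseRange.prodMap hf.denseRange hg).comp Prod.swap_surjective.denseRange
        ((continuous_const_smul _).prodMap ((continuous_const_smul _).comp T.continuous))
    have cmid : Continuous (fun p : H × H =>
        ((1 + Complex.I) • p.2, (1 - Complex.I) • T p.1)) :=
      ((continuous_const_smul _).comp continuous_snd).prodMk
        ((continuous_const_smul _).comp (T.continuous.comp continuous_fst))
    exact (e.symm.toHomeomorph.surjective.denseRange.comp hmid e.symm.continuous).comp
      e.toHomeomorph.surjective.denseRange (e.symm.continuous.comp cmid)
  · ext z
    apply e.injective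
    simp only [ContinuousLinearMap.mul_apply, hX, hA, ContinuousLinearMap.smul_apply,
      map_smul, Prod.smul_fst, Prod.smul_snd, ContinuousLinearMap.neg_apply, map_smul,
      Prod.smul_mk, Prod.mk.injEq, smul_smul]
    constructor <;> match_scalars <;> linear_combination Complex.I_sq
  · ext z
    apply e.injective
    simp only [ContinuousLinearMap.mul_apply, hX, hA, ContinuousLinearMap.smul_apply,
      map_smul, Prod.smul_fst, Prod.smul_snd, ContinuousLinearMap.neg_apply, map_smul,
      Prod.smul_mk, Prod.mk.injEq, smul_smul]
    constructor <;> match_scalars <;> linear_combination Complex.I_sq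
end

section
/- Let H be an infinite dimensional separable complex Hilbert space. Every bounded linear operator on H has a nontrivial closed invariant subspace if and only if every pair {A, B} of commuting bounded operators on H satisfying A² = B² has a common nontrivial closed invariant subspace. -/
/-- `T` has a nontrivial closed invariant subspace. -/
def HasNontrivialClosedInvariantSubspace {H : Type*} [NormedAddCommGroup H]
    [InnerProductSpace ℂ H] (T : H →L[ℂ] H) : Prop :=
  ∃ M : Submodule ℂ H, IsClosed (M : Set H) ∧ M ≠ ⊥ ∧ M ≠ ⊤ ∧ ∀ x ∈ M, T x ∈ M

theorem stmt_17 {H : Type*} [NormedAddCommGroup H] [InnerProductSpace ℂ H]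
    [CompleteSpace H] [TopologicalSpace.SeparableSpace H]
    (hdim : ¬ FiniteDimensional ℂ H) :
    (∀ T : H →L[ℂ] H, HasNontrivialClosedInvariantSubspace T) ↔
      (∀ A B : H →L[ℂ] H, A * B = B * A → A ^ 2 = B ^ 2 →
        ∃ M : Submodule ℂ H, IsClosed (M : Set H) ∧ M ≠ ⊥ ∧ M ≠ ⊤ ∧
          (∀ x ∈ M, A x ∈ M) ∧ ∀ x ∈ M, B x ∈ M) := by
  constructor
  · intro h A B hcomm hsq
    by_cases hAB : A = B
    · obtain ⟨M, hc, hb, ht, hi⟩ := h A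
      exact ⟨M, hc, hb, ht, hi, fun x hx => hAB ▸ hi x hx⟩
    by_cases hAB' : A = -B
    · obtain ⟨M, hc, hb, ht, hi⟩ := h A
      refine ⟨M, hc, hb, ht, hi, fun x hx => ?_⟩
      have h1 := hi x hx
      rw [hAB'] at h1
      simpa using M.neg_mem h1
    · set C : H →L[ℂ] H := A - B with hC
      set D : H →L[ℂ] H := A + B with hD
      have hAC : A * C = C * A := by
        simp only [hC, mul_sub, sub_mul, hcomm]
      have hBC : B * C = C * B := by
        simp only [hC, mul_sub, sub_mul, hcomm]
      have hDC : D * C = 0 := by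
        have : (A + B) * (A - B) = A ^ 2 - B ^ 2 + (B * A - A * B) := by
          noncomm_ring
        rw [hD, hC, this, hsq, hcomm]
        abel
      set M : Submodule ℂ H := (LinearMap.range (C : H →ₗ[ℂ] H)).topologicalClosure with hM
      have hMcoe : (M : Set H) = closure (LinearMap.range (C : H →ₗ[ℂ] H) : Set H) :=
        Submodule.topologicalClosure_coe _
      have hrange_le : LinearMap.range (C : H →ₗ[ℂ] H) ≤ M := Submodule.le_topologicalClosure _
      -- D vanishes on M
      have hDzero : ∀ x ∈ M, D x = 0 := by
        intro x hx
        have hxcl : x ∈ closure (LinearMap.range (C : H →ₗ[ℂ] H) : Set H) := by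
          rw [← hMcoe]; exact hx
        have hsub : closure (LinearMap.range (C : H →ₗ[ℂ] H) : Set H) ⊆ D ⁻¹' {0} := by
          apply closure_minimal
          · rintro _ ⟨z, rfl⟩
            have : (D * C) z = 0 := by rw [hDC]; rfl
            simpa [ContinuousLinearMap.mul_apply] using this
          · exact IsClosed.preimage D.continuous isClosed_singleton
        simpa using hsub hxcl
      -- invariance under an operator commuting with C
      have hinv : ∀ (T : H →L[ℂ] H), T * C = C * T → ∀ x ∈ M, T x ∈ M := by
        intro T hTC x hx
        have hxcl : x ∈ closure (LinearMap.range (C : H →ₗ[ℂ] H) : Set H) := by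
          rw [← hMcoe]; exact hx
        have hsub : closure (LinearMap.range (C : H →ₗ[ℂ] H) : Set H) ⊆ T ⁻¹' (M : Set H) := by
          apply closure_minimal
          · rintro _ ⟨z, rfl⟩
            have h1 : T (C z) = C (T z) := by
              have := congrArg (fun f : H →L[ℂ] H => f z) hTC
              simpa [ContinuousLinearMap.mul_apply] using this
            simp only [Set.mem_preimage, h1, SetLike.mem_coe]
            exact hrange_le ⟨T z, h1.symm⟩
          · exact IsClosed.preimage T.continuous (Submodule.isClosed_topologicalClosure _)
        exact hsub hxcl
      refine ⟨M, Submodule.isClosed_topologicalClosure _, ?_, ?_, hinv A hAC, hinv B hBC⟩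
      · -- M ≠ ⊥
        intro hbot
        apply hAB
        have hC0 : C = 0 := by
          ext z
          have : C z ∈ M := hrange_le ⟨z, rfl⟩
          rw [hbot] at this
          simpa using this
        exact sub_eq_zero.mp hC0
      · -- M ≠ ⊤
        intro htop
        apply hAB'
        have hD0 : D = 0 := by
          ext z
          have : (z : H) ∈ M := by rw [htop]; trivial
          simpa using hDzero z this
        have : A + B = 0 := hD0
        exact eq_neg_of_add_eq_zero_left this
  · intro h T
    obtain ⟨M, hc, hb, ht, hi, _⟩ := h T T rfl rfl
    exact ⟨M, hc, hb, ht, hi⟩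
end
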